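/- Let triangles ABC and A'B'C' have equal acute angles at C and C' (∠C = ∠C'), equal sides AB = A'B', and supplementary angles at A (∠A + ∠A' = π). Then CB = C'B'. -/

import Mathlib

open EuclideanGeometry Real

noncomputable section

/-- The Euclidean plane. -/
abbrev Pt : Type := EuclideanSpace ℝ (Fin 2)

/-- The point of the Euclidean plane with the given coordinates. -/
def pt (x y : ℝ) : Pt := WithLp.toLp 2 ![x, y]

open InnerProductGeometry in
lemma sin_area_aux {V : Type*} [NormedAddCommGroup V] [InnerProductSpace ℝ V] (x y : V) :
    Real.sin (InnerProductGeometry.angle x y) * (‖x‖ * ‖y‖) =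
      Real.sin (InnerProductGeometry.angle (y - x) (-x)) * (‖y - x‖ * ‖-x‖) := by
  rw [sin_angle_mul_norm_mul_norm, sin_angle_mul_norm_mul_norm]
  congr 1
  simp only [inner_sub_left, inner_sub_right, inner_neg_left, inner_neg_right,
    real_inner_comm y x]
  ring

/-- The "law of sines" in product form: sin C · CA · CB = sin A · AB · AC. -/
lemma sin_mul_dist {V : Type*} {P : Type*} [NormedAddCommGroup V] [InnerProductSpace ℝ V]
    [MetricSpace P] [NormedAddTorsor V P] (A B C : P) :
    Real.sin (∠ A C B) * (dist A C * dist B C) =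
      Real.sin (∠ B A C) * (dist B A * dist C A) := by
  rw [EuclideanGeometry.angle, EuclideanGeometry.angle,
    dist_eq_norm_vsub V, dist_eq_norm_vsub V, dist_eq_norm_vsub V, dist_eq_norm_vsub V]
  have h1 : B -ᵥ A = (B -ᵥ C) - (A -ᵥ C) := by rw [vsub_sub_vsub_cancel_right]
  have h2 : C -ᵥ A = -(A -ᵥ C) := by rw [neg_vsub_eq_vsub_rev]
  rw [h1, h2]
  exact sin_area_aux (A -ᵥ C) (B -ᵥ C)

/-- If triangles `ABC` and `A'B'C'` have equal acute angles at `C` and `C'`, equal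
sides `AB = A'B'`, and supplementary angles at `A` and `A'`, then `CB = C'B'`. -/
theorem side_eq_of_supplementary_angles (A B C A' B' C' : Pt)
    (hABC : AffineIndependent ℝ ![A, B, C])
    (hABC' : AffineIndependent ℝ ![A', B', C'])
    (hacute : ∠ A C B < π / 2)
    (hang : ∠ A C B = ∠ A' C' B')
    (hside : dist A B = dist A' B')
    (hsupp : ∠ B A C + ∠ B' A' C' = π) :
    dist C B = dist C' B' := by
  have hnc : ¬Collinear ℝ ({A, B, C} : Set Pt) :=
    affineIndependent_iff_not_collinear_set.mp hABC
  have hnc' : ¬Collinear ℝ ({A', B', C'} : Set Pt) :=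
    affineIndependent_iff_not_collinear_set.mp hABC'
  have hncC : ¬Collinear ℝ ({A, C, B} : Set Pt) := by
    intro h; exact hnc (by rwa [Set.pair_comm C B] at h)
  have hncC' : ¬Collinear ℝ ({A', C', B'} : Set Pt) := by
    intro h; exact hnc' (by rwa [Set.pair_comm C' B'] at h)
  have hsin : Real.sin (∠ A C B) ≠ 0 := sin_ne_zero_of_not_collinear hncC
  have hAC : dist A C ≠ 0 := by
    simp only [dist_ne_zero]
    exact ne₁₂_of_not_collinear hncC
  have hAC' : dist A' C' ≠ 0 := by
    simp only [dist_ne_zero]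
    exact ne₁₂_of_not_collinear hncC'
  -- law of sines in both triangles
  have h1 := sin_mul_dist A B C
  have h2 := sin_mul_dist A' B' C'
  -- sin A' = sin A since the angles are supplementary
  have hsinA : Real.sin (∠ B' A' C') = Real.sin (∠ B A C) := by
    have : ∠ B' A' C' = π - ∠ B A C := by linarith
    rw [this, Real.sin_pi_sub]
  rw [hsinA, dist_comm B' A', dist_comm C' A', ← hside] at h2
  rw [dist_comm B A, dist_comm C A] at h1
  -- cancel common factors
  have key : Real.sin (∠ A' C' B') * dist B C = Real.sin (∠ A' C' B') * dist B' C' := by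
    have e1 : Real.sin (∠ A' C' B') * dist B C * dist A C
        = Real.sin (∠ B A C) * dist A B * dist A C := by
      rw [← hang]; linarith [h1]
    have e2 : Real.sin (∠ A' C' B') * dist B' C' * dist A' C'
        = Real.sin (∠ B A C) * dist A B * dist A' C' := by linarith [h2]
    have e3 : Real.sin (∠ A' C' B') * dist B C = Real.sin (∠ B A C) * dist A B :=
      mul_right_cancel₀ hAC (by linarith)
    have e4 : Real.sin (∠ A' C' B') * dist B' C' = Real.sin (∠ B A C) * dist A B :=
      mul_right_cancel₀ hAC' (by linarith)
    rw [e3, e4]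
  have hsin' : Real.sin (∠ A' C' B') ≠ 0 := by rwa [← hang]
  have := mul_left_cancel₀ hsin' key
  rwa [dist_comm B C, dist_comm B' C'] at this
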